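/- For every integer k ≥ 1, one has Σ_{m=0}^{∞} (k/(2m+k)) · 2^{−(2m+k)} · binom(2m+k, m) = 1; that is, the hitting probabilities Q_k(n) = (k/n)·2^{−n}·binom(n,(n+k)/2), summed over all n ≥ k with n ≡ k (mod 2), total 1 (the simple random walk hits −k almost surely). -/

import Mathlib

open Finset Filter

-- key nat identity: (N+2)*C(N+1,m+1) = (N+2)*C(N+1,m) + k*C(N+2,m+1), N = 2m+k
lemma keyNat (k m : ℕ) :
    (2*m+k+2) * Nat.choose (2*m+k+1) (m+1)
      = (2*m+k+2) * Nat.choose (2*m+k+1) m + k * Nat.choose (2*m+k+2) (m+1) := by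
  have h1 := Nat.add_one_mul_choose_eq (2*m+k+1) m
  have h2 := Nat.choose_mul_succ_eq (2*m+k+1) (m+1)
  have e : 2*m+k+1+1 - (m+1) = m+k+1 := by omega
  rw [e] at h2
  -- h1 : (2*m+k+1+1) * choose (2*m+k+1) m = choose (2*m+k+2) (m+1) * (m+1)
  -- h2 : choose (2*m+k+1) (m+1) * (2*m+k+1+1) = choose (2*m+k+2) (m+1) * (m+k+1)
  nlinarith [h1, h2]

lemma centralBinom_sq_bound (n : ℕ) : (2*n+1) * Nat.centralBinom n ^ 2 ≤ 16 ^ n := by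
  induction n with
  | zero => simp [Nat.centralBinom]
  | succ n ih =>
    have h := Nat.succ_mul_centralBinom_succ n
    have key : (n+1)^2 * ((2*(n+1)+1) * Nat.centralBinom (n+1) ^ 2)
        = (2*n+3)*(2*n+1)*4 * ((2*n+1) * Nat.centralBinom n ^ 2) := by
      have : ((n+1) * Nat.centralBinom (n+1))^2 = (2*(2*n+1)*Nat.centralBinom n)^2 := by
        rw [h]
      nlinarith [this]
    have h3 : (2*n+3)*(2*n+1)*4 * ((2*n+1) * Nat.centralBinom n ^ 2)
        ≤ (2*n+3)*(2*n+1)*4 * 16^n := Nat.mul_le_mul_left _ ih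
    have h4 : (2*n+3)*(2*n+1)*4*16^n ≤ (n+1)^2 * 16^(n+1) := by
      have hb : (2*n+3)*(2*n+1)*4 ≤ (n+1)^2*16 := by nlinarith
      calc (2*n+3)*(2*n+1)*4*16^n ≤ (n+1)^2*16*16^n := Nat.mul_le_mul_right _ hb
        _ = (n+1)^2 * 16^(n+1) := by ring
    have := le_trans (le_of_eq key) (le_trans h3 h4)
    exact Nat.le_of_mul_le_mul_left this (by positivity)

lemma sum_shift (a : ℕ → ℝ) (k : ℕ) :
    ∑ i ∈ range k, a (i+1) = ∑ i ∈ range k, a i + a k - a 0 := by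
  have h1 := Finset.sum_range_succ a k
  have h2 := Finset.sum_range_succ' a k
  linarith

lemma pascal_sum (n j k : ℕ) :
    ∑ i ∈ range k, (Nat.choose (n+1) (j+1+i) : ℝ)
      = 2 * ∑ i ∈ range k, (Nat.choose n (j+i) : ℝ)
        + Nat.choose n (j+k) - Nat.choose n j := by
  have step : ∀ i, (Nat.choose (n+1) (j+1+i) : ℝ)
      = Nat.choose n (j+i) + Nat.choose n (j+i+1) := by
    intro i
    have : j+1+i = (j+i)+1 := by omega
    rw [this, Nat.choose_succ_succ]
    push_cast; ring
  rw [Finset.sum_congr rfl fun i _ => step i, Finset.sum_add_distrib]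
  have hs := sum_shift (fun i => (Nat.choose n (j+i) : ℝ)) k
  simp only [← add_assoc] at hs
  rw [hs]
  norm_num
  ring

lemma telescope (k m : ℕ) (hk : 1 ≤ k) :
    (∑ i ∈ range k, (Nat.choose (2*m+k) (m+i) : ℝ)) / 2^(2*m+k)
      - (∑ i ∈ range k, (Nat.choose (2*(m+1)+k) (m+1+i) : ℝ)) / 2^(2*(m+1)+k)
    = ((k : ℝ) / (2 * (m+1 : ℕ) + k)) * (Nat.choose (2*(m+1)+k) (m+1) : ℝ)
        / 2 ^ (2*(m+1)+k) := by
  set N := 2*m+k with hN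
  have hNe : 2*(m+1)+k = N+2 := by omega
  rw [hNe]
  -- split top sum by Pascal
  have hA : ∑ i ∈ range k, (Nat.choose (N+2) (m+1+i) : ℝ)
      = ∑ i ∈ range k, (Nat.choose (N+1) (m+i) : ℝ)
        + ∑ i ∈ range k, (Nat.choose (N+1) (m+i+1) : ℝ) := by
    rw [← Finset.sum_add_distrib]
    refine Finset.sum_congr rfl fun i _ => ?_
    have e : m+1+i = (m+i)+1 := by omega
    rw [e, show N+2 = (N+1)+1 from rfl, Nat.choose_succ_succ]
    push_cast; ring
  have hshift := sum_shift (fun i => (Nat.choose (N+1) (m+i) : ℝ)) k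
  simp only [← add_assoc] at hshift
  have hB := pascal_sum N m k
  have hBB : ∑ i ∈ range k, (Nat.choose (N+1) (m+i+1) : ℝ)
      = 2 * ∑ i ∈ range k, (Nat.choose N (m+i) : ℝ)
        + Nat.choose N (m+k) - Nat.choose N m := by
    rw [← hB]
    refine Finset.sum_congr rfl fun i _ => ?_
    have e : m+1+i = m+i+1 := by omega
    rw [e]
  have hs1 : (Nat.choose N (m+k) : ℝ) = Nat.choose N m := by
    have h := Nat.choose_symm (show m ≤ N by omega)
    have e : N - m = m + k := by omega
    rw [e] at h
    exact_mod_cast h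
  have hs2 : (Nat.choose (N+1) (m+k) : ℝ) = Nat.choose (N+1) (m+1) := by
    have h := Nat.choose_symm (show m+1 ≤ N+1 by omega)
    have e : N + 1 - (m+1) = m + k := by omega
    rw [e] at h
    exact_mod_cast h
  have hkey : ((N:ℝ)+2) * Nat.choose (N+1) (m+1)
      = ((N:ℝ)+2) * Nat.choose (N+1) m + k * Nat.choose (N+2) (m+1) := by
    have := keyNat k m
    push_cast [← hN] at this ⊢
    exact_mod_cast this
  have hS2 : ∑ i ∈ range k, (Nat.choose (N+2) (m+1+i) : ℝ)
      = 4 * ∑ i ∈ range k, (Nat.choose N (m+i) : ℝ)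
        - ((Nat.choose (N+1) (m+1) : ℝ) - Nat.choose (N+1) m) := by
    have h0 : (m:ℕ) + 0 = m := by omega
    rw [hA, hBB]
    have hsh : ∑ i ∈ range k, (Nat.choose (N+1) (m+i) : ℝ)
        = ∑ i ∈ range k, (Nat.choose (N+1) (m+i+1) : ℝ)
          - Nat.choose (N+1) (m+k) + Nat.choose (N+1) m := by
      simp only [h0] at hshift
      linarith [hshift]
    rw [hsh, hBB]
    linarith [hs1, hs2]
  have hpow : (2:ℝ)^(N+2) = 4 * 2^N := by rw [pow_add]; ring
  have hcast : (2 * ((m:ℝ)+1) + k) = (N:ℝ) + 2 := by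
    rw [hN]; push_cast; ring
  push_cast [hcast]
  rw [hS2, hpow]
  have hNpos : (0:ℝ) < 2^N := by positivity
  have hden : ((N:ℝ)+2) ≠ 0 := by positivity
  field_simp
  linear_combination hkey

lemma partial_sum (k : ℕ) (hk : 1 ≤ k) (M : ℕ) :
    ∑ m ∈ range (M+1),
        ((k : ℝ) / (2 * m + k)) * (Nat.choose (2 * m + k) m : ℝ) / 2 ^ (2 * m + k)
      = 1 - (∑ i ∈ range k, (Nat.choose (2*M+k) (M+i) : ℝ)) / 2^(2*M+k) := by
  induction M with
  | zero =>
    rw [Finset.sum_range_one]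
    have hk0 : (k:ℝ) ≠ 0 := by positivity
    have hsum : ∑ i ∈ range k, (Nat.choose k i : ℝ) = 2^k - 1 := by
      have h := Nat.sum_range_choose k
      rw [Finset.sum_range_succ] at h
      have : (↑(∑ i ∈ range k, Nat.choose k i) : ℝ) = ((2^k - Nat.choose k k : ℕ) : ℝ) := by
        congr 1; omega
      push_cast at this
      simpa [Nat.choose_self] using this
    simp only [Nat.mul_zero, Nat.zero_add, Nat.choose_zero_right, Nat.cast_zero]
    rw [hsum]
    have h2 : (2:ℝ)^k ≠ 0 := by positivity
    field_simp
    push_cast; ring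
  | succ M ih =>
    rw [Finset.sum_range_succ, ih]
    have ht := telescope k M hk
    push_cast at ht ⊢
    linarith [ht]

lemma g_decay (k : ℕ) (hk : 1 ≤ k) :
    Filter.Tendsto
      (fun M => (∑ i ∈ range k, (Nat.choose (2*M+k) (M+i) : ℝ)) / 2^(2*M+k))
      atTop (nhds 0) := by
  have hub : ∀ M : ℕ, (∑ i ∈ range k, (Nat.choose (2*M+k) (M+i) : ℝ)) / 2^(2*M+k)
      ≤ (k:ℝ) * 2^k / Real.sqrt (2*(M+k : ℕ)+1) := by
    intro M
    have hterm : ∀ i, (Nat.choose (2*M+k) (M+i) : ℝ) ≤ Nat.centralBinom (M+k) := by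
      intro i
      have h1 : Nat.choose (2*M+k) (M+i) ≤ Nat.choose (2*(M+k)) (M+i) :=
        Nat.choose_le_choose _ (by omega)
      have h2 : Nat.choose (2*(M+k)) (M+i) ≤ Nat.centralBinom (M+k) :=
        Nat.choose_le_centralBinom _ _
      exact_mod_cast le_trans h1 h2
    have hsum : (∑ i ∈ range k, (Nat.choose (2*M+k) (M+i) : ℝ))
        ≤ k * Nat.centralBinom (M+k) := by
      calc (∑ i ∈ range k, (Nat.choose (2*M+k) (M+i) : ℝ))
          ≤ ∑ _i ∈ range k, (Nat.centralBinom (M+k) : ℝ) :=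
            Finset.sum_le_sum fun i _ => hterm i
        _ = k * Nat.centralBinom (M+k) := by
            rw [Finset.sum_const, Finset.card_range]; ring
    set n := M + k with hn
    have hpos : (0:ℝ) < 2*(n:ℝ)+1 := by positivity
    have hbR : ((2*n+1 : ℕ) : ℝ) * (Nat.centralBinom n : ℝ)^2 ≤ 16^n := by
      exact_mod_cast centralBinom_sq_bound n
    have hsq : (Nat.centralBinom n : ℝ)^2 ≤ 16^n / (2*(n:ℝ)+1) := by
      rw [le_div_iff₀ hpos]
      push_cast at hbR
      linarith [hbR]
    have h16 : ((4:ℝ)^n)^2 = 16^n := by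
      rw [← pow_mul, mul_comm, pow_mul]; norm_num
    have hcb : (Nat.centralBinom n : ℝ) ≤ 4^n / Real.sqrt (2*(n:ℝ)+1) := by
      have h1 : (Nat.centralBinom n : ℝ) ≤ Real.sqrt (16^n / (2*(n:ℝ)+1)) :=
        Real.le_sqrt_of_sq_le hsq
      have h2 : Real.sqrt ((16:ℝ)^n / (2*(n:ℝ)+1)) = 4^n / Real.sqrt (2*(n:ℝ)+1) := by
        rw [Real.sqrt_div (by positivity : (0:ℝ) ≤ 16^n), ← h16,
          Real.sqrt_sq (by positivity : (0:ℝ) ≤ (4:ℝ)^n)]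
      rw [h2] at h1
      exact h1
    have hpow : (4:ℝ)^n = 2^(2*M+k) * 2^k := by
      rw [show (4:ℝ) = 2^2 by norm_num, ← pow_mul, ← pow_add]
      congr 1; omega
    have hsqrtpos : (0:ℝ) < Real.sqrt (2*(n:ℝ)+1) := Real.sqrt_pos.2 hpos
    have h2p : (0:ℝ) < (2:ℝ)^(2*M+k) := by positivity
    calc (∑ i ∈ range k, (Nat.choose (2*M+k) (M+i) : ℝ)) / 2^(2*M+k)
        ≤ ((k:ℝ) * Nat.centralBinom n) / 2^(2*M+k) := by gcongr
      _ ≤ ((k:ℝ) * (4^n / Real.sqrt (2*(n:ℝ)+1))) / 2^(2*M+k) := by gcongr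
      _ = (k:ℝ) * 2^k / Real.sqrt (2*(n:ℝ)+1) := by
          rw [hpow]; field_simp
  have hlb : ∀ M : ℕ, (0:ℝ) ≤ (∑ i ∈ range k, (Nat.choose (2*M+k) (M+i) : ℝ)) / 2^(2*M+k) := by
    intro M; positivity
  have hbound : Filter.Tendsto (fun M : ℕ => (k:ℝ) * 2^k / Real.sqrt (2*(M+k : ℕ)+1))
      atTop (nhds 0) := by
    apply Filter.Tendsto.div_atTop tendsto_const_nhds
    have hsqrt : Filter.Tendsto Real.sqrt atTop atTop := by
      rw [Filter.tendsto_atTop_atTop]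
      intro b
      refine ⟨b^2, fun a ha => ?_⟩
      calc b ≤ |b| := le_abs_self b
        _ = Real.sqrt (b^2) := (Real.sqrt_sq_eq_abs b).symm
        _ ≤ Real.sqrt a := Real.sqrt_le_sqrt ha
    apply Filter.Tendsto.comp hsqrt
    apply Filter.tendsto_atTop_add_const_right
    apply Filter.Tendsto.const_mul_atTop (by norm_num : (0:ℝ) < 2)
    exact Filter.Tendsto.comp tendsto_natCast_atTop_atTop (tendsto_add_atTop_nat k)
  exact squeeze_zero hlb hub hbound

/-- For every integer `k ≥ 1`,
`Σ_{m=0}^∞ (k/(2m+k)) · 2^{−(2m+k)} · C(2m+k, m) = 1`: the simple random walk hits `−k`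
almost surely. -/
theorem first_hit_prob_total_one (k : ℕ) (hk : 1 ≤ k) :
    ∑' m : ℕ, ((k : ℝ) / (2 * m + k)) * (Nat.choose (2 * m + k) m : ℝ) / 2 ^ (2 * m + k)
      = 1 := by
  have hf : ∀ m : ℕ,
      0 ≤ ((k : ℝ) / (2 * m + k)) * (Nat.choose (2 * m + k) m : ℝ) / 2 ^ (2 * m + k) := by
    intro m; positivity
  have htend : Filter.Tendsto
      (fun n => ∑ m ∈ range n,
        ((k : ℝ) / (2 * m + k)) * (Nat.choose (2 * m + k) m : ℝ) / 2 ^ (2 * m + k))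
      atTop (nhds 1) := by
    rw [← Filter.tendsto_add_atTop_iff_nat 1]
    simp only [partial_sum k hk]
    have h := (g_decay k hk).const_sub 1
    simpa using h
  exact ((hasSum_iff_tendsto_nat_of_nonneg hf 1).2 htend).tsum_eq
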